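/- Let m ≥ 2 and let v ∈ ZMod (2m). The set of all edges of odd order containing the vertex v is a blocker in CK(2m) (i.e., it has exactly m edges and contains an edge of every SPM). -/

import Mathlib

def inArc (n : ℕ) (a b z : ZMod n) : Prop :=
  0 < (z - a).val ∧ (z - a).val < (b - a).val

def Cross (n : ℕ) (e f : Sym2 (ZMod n)) : Prop :=
  ∃ a b c d : ZMod n, e = s(a, b) ∧ f = s(c, d) ∧
    a ≠ b ∧ a ≠ c ∧ a ≠ d ∧ b ≠ c ∧ b ≠ d ∧ c ≠ d ∧
    Xor' (inArc n a b c) (inArc n a b d)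

def IsSPM (m : ℕ) (M : Finset (Sym2 (ZMod (2 * m)))) : Prop :=
  M.card = m ∧
  (∀ e ∈ M, ¬ e.IsDiag) ∧
  (∀ v : ZMod (2 * m), ∃! e, e ∈ M ∧ v ∈ e) ∧
  (∀ e ∈ M, ∀ f ∈ M, ¬ Cross (2 * m) e f)

def IsBlockingSet (m : ℕ) (B : Set (Sym2 (ZMod (2 * m)))) : Prop :=
  (∀ e ∈ B, ¬ e.IsDiag) ∧
  ∀ M : Finset (Sym2 (ZMod (2 * m))), IsSPM m M → ∃ e ∈ M, e ∈ B

def IsBlocker (m : ℕ) (B : Finset (Sym2 (ZMod (2 * m)))) : Prop :=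
  IsBlockingSet m (B : Set (Sym2 (ZMod (2 * m)))) ∧ B.card = m

def IsBoundaryEdge (m : ℕ) (e : Sym2 (ZMod (2 * m))) : Prop :=
  ∃ i : ZMod (2 * m), e = s(i, i + 1)

def edgeOrder {n : ℕ} (e : Sym2 (ZMod n)) : ℕ :=
  Sym2.lift ⟨fun i j => min (i - j).val (j - i).val, fun i j => min_comm _ _⟩ e

def edgeSum {n : ℕ} (e : Sym2 (ZMod n)) : ZMod n :=
  Sym2.lift ⟨fun i j => i + j, fun i j => add_comm i j⟩ e
lemma even_card_of_invol {α : Type*} [DecidableEq α] (s : Finset α) (f : α → α)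
    (hinv : ∀ a, f (f a) = a) (hne : ∀ a, f a ≠ a)
    (hmem : ∀ a ∈ s, f a ∈ s) : Even s.card := by
  suffices H : ∀ n (s : Finset α), s.card ≤ n → (∀ a ∈ s, f a ∈ s) → Even s.card from
    H s.card s le_rfl hmem
  clear hmem
  intro n
  induction n using Nat.strong_induction_on with
  | _ n ih =>
    intro s hcard hmem
    rcases s.eq_empty_or_nonempty with rfl | ⟨a, ha⟩
    · simp
    · have hfa := hmem a ha
      have hane := hne a
      set s' := (s.erase a).erase (f a) with hs'
      have hfas : f a ∈ s.erase a := Finset.mem_erase.mpr ⟨hane, hfa⟩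
      have hcard' : s'.card = s.card - 2 := by
        rw [hs', Finset.card_erase_of_mem hfas, Finset.card_erase_of_mem ha]
        omega
      have hmem' : ∀ b ∈ s', f b ∈ s' := by
        intro b hb
        rcases Finset.mem_erase.mp hb with ⟨hbfa, hb2⟩
        rcases Finset.mem_erase.mp hb2 with ⟨hba, hbs⟩
        refine Finset.mem_erase.mpr ⟨fun h => hba ?_, Finset.mem_erase.mpr ⟨fun h => hbfa ?_, hmem b hbs⟩⟩
        · rw [← hinv b, h, hinv]
        · rw [← hinv b, h]
      have h2 : 2 ≤ s.card := by
        have h1 : 1 ≤ (s.erase a).card := Finset.card_pos.mpr ⟨f a, hfas⟩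
        have := Finset.card_erase_of_mem ha
        omega
      have hpos : 0 < n := lt_of_lt_of_le (by omega) hcard
      obtain ⟨r, hr⟩ := ih (n - 1) (by omega) s' (by omega) hmem'
      exact ⟨r + 1, by omega⟩

lemma spm_edge_odd (m : ℕ) (hm : 2 ≤ m) {M : Finset (Sym2 (ZMod (2 * m)))}
    (hM : IsSPM m M) {a b : ZMod (2 * m)} (hab : s(a, b) ∈ M) : Odd ((b - a).val) := by
  haveI : NeZero (2 * m) := ⟨by omega⟩
  obtain ⟨hcard, hdiag, hcover, hcross⟩ := hM
  have hex : ∀ z : ZMod (2 * m), ∃ w, s(z, w) ∈ M := by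
    intro z
    obtain ⟨e, ⟨heM, hz⟩, -⟩ := hcover z
    obtain ⟨w, rfl⟩ := Sym2.mem_iff_exists.mp hz
    exact ⟨w, heM⟩
  choose p hp using hex
  have hpne : ∀ z, p z ≠ z := by
    intro z h
    exact hdiag _ (hp z) (by rw [h]; exact Sym2.mk_isDiag_iff.mpr rfl)
  have huniq : ∀ z w, s(z, w) ∈ M → w = p z := by
    intro z w h
    obtain ⟨e, -, hu⟩ := hcover z
    have h1 : s(z, w) = e := hu _ ⟨h, Sym2.mem_mk_left z w⟩
    have h2 : s(z, p z) = e := hu _ ⟨hp z, Sym2.mem_mk_left _ _⟩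
    rcases Sym2.eq_iff.mp (h1.trans h2.symm) with ⟨-, h3⟩ | ⟨h3, h4⟩
    · exact h3
    · exact h4.trans h3
  have hinv : ∀ z, p (p z) = z := by
    intro z
    have : s(p z, z) ∈ M := by rw [Sym2.eq_swap]; exact hp z
    exact (huniq _ _ this).symm
  have hne : a ≠ b := fun h =>
    hdiag _ hab (by rw [h]; exact Sym2.mk_isDiag_iff.mpr rfl)
  set k := (b - a).val with hk
  have hk0 : k ≠ 0 := by
    simp only [hk, Ne, ZMod.val_eq_zero, sub_eq_zero]
    exact fun h => hne h.symm
  have hkn : k < 2 * m := ZMod.val_lt _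
  set S : Finset (ZMod (2 * m)) :=
    Finset.univ.filter (fun z => 0 < (z - a).val ∧ (z - a).val < k) with hS
  have hmemS : ∀ z, z ∈ S ↔ (0 < (z - a).val ∧ (z - a).val < k) := by
    intro z; simp [hS]
  have hcardS : S.card = k - 1 := by
    have := Finset.card_nbij' (s := S) (t := Finset.Ioo 0 k)
      (fun z => (z - a).val) (fun j => a + (j : ZMod (2 * m)))
      (by intro z hz; rw [Finset.mem_coe, hmemS] at hz; simp [Finset.mem_Ioo, hz.1, hz.2])
      (by
        intro j hj
        rw [Finset.mem_coe, Finset.mem_Ioo] at hj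
        rw [Finset.mem_coe, hmemS, add_sub_cancel_left, ZMod.val_cast_of_lt (by omega)]
        exact hj)
      (by
        intro z _
        simp [ZMod.natCast_val, ZMod.cast_id])
      (by
        intro j hj
        rw [Finset.mem_coe, Finset.mem_Ioo] at hj
        show ((a + (j : ZMod (2 * m))) - a).val = j
        rw [add_sub_cancel_left, ZMod.val_cast_of_lt (by omega)])
    rw [this, Nat.card_Ioo]
    omega
  have hclosed : ∀ z ∈ S, p z ∈ S := by
    intro z hz
    by_contra hpz
    rw [hmemS] at hz
    have hza : z ≠ a := by intro h; rw [h] at hz; simp at hz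
    have hzb : z ≠ b := by intro h; rw [h] at hz; exact absurd hz.2 (lt_irrefl _)
    have hpa : p z ≠ a := by
      intro h
      have hm1 : s(a, z) ∈ M := by rw [← h, Sym2.eq_swap]; exact hp z
      exact hzb ((huniq a z hm1).trans (huniq a b hab).symm)
    have hpb : p z ≠ b := by
      intro h
      have hm1 : s(b, z) ∈ M := by rw [← h, Sym2.eq_swap]; exact hp z
      have hm2 : s(b, a) ∈ M := by rw [Sym2.eq_swap]; exact hab
      exact hza ((huniq b z hm1).trans (huniq b a hm2).symm)
    apply hcross _ hab _ (hp z)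
    refine ⟨a, b, z, p z, rfl, rfl, hne, Ne.symm hza, Ne.symm hpa, Ne.symm hzb,
      Ne.symm hpb, Ne.symm (hpne z), ?_⟩
    exact Or.inl ⟨⟨hz.1, hz.2⟩, fun hc => hpz ((hmemS _).mpr ⟨hc.1, hc.2⟩)⟩
  have heven := even_card_of_invol S p hinv hpne hclosed
  rw [hcardS] at heven
  obtain ⟨r, hr⟩ := heven
  exact ⟨r, by omega⟩

theorem odd_star_is_blocker (m : ℕ) (hm : 2 ≤ m) (v : ZMod (2 * m)) :
    {e : Sym2 (ZMod (2 * m)) | v ∈ e ∧ Odd (edgeOrder e)}.ncard = m ∧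
    IsBlockingSet m {e : Sym2 (ZMod (2 * m)) | v ∈ e ∧ Odd (edgeOrder e)} := by
  haveI : NeZero (2 * m) := ⟨by omega⟩
  set T := {e : Sym2 (ZMod (2 * m)) | v ∈ e ∧ Odd (edgeOrder e)} with hT
  have hchar : ∀ e, e ∈ T ↔ ∃ j < m, e = s(v, v + ((2 * j + 1 : ℕ) : ZMod (2 * m))) := by
    intro e
    constructor
    · rintro ⟨hv, hodd⟩
      obtain ⟨w, rfl⟩ := Sym2.mem_iff_exists.mp hv
      have hwv : w ≠ v := by
        intro h; subst h
        simp [edgeOrder] at hodd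
      set k := (w - v).val with hk
      have hk0 : k ≠ 0 := by
        simp only [hk, Ne, ZMod.val_eq_zero, sub_eq_zero]
        exact hwv
      have hkn : k < 2 * m := ZMod.val_lt _
      have hvw : (v - w).val = 2 * m - k := by
        have h5 : v - w = -(w - v) := by ring
        rw [h5, ZMod.neg_val, if_neg (sub_ne_zero.mpr hwv)]
      have hordeq : edgeOrder s(v, w) = min (2 * m - k) k := by
        simp only [edgeOrder, Sym2.lift_mk, hvw, ← hk]
      have hkodd : Odd k := by
        rcases Nat.even_or_odd k with he | ho
        · exfalso
          obtain ⟨r, hr⟩ := he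
          have heven2 : Even (2 * m - k) := ⟨m - r, by omega⟩
          rw [hordeq] at hodd
          rcases le_total (2 * m - k) k with h | h
          · rw [min_eq_left h] at hodd; exact (Nat.not_odd_iff_even.mpr heven2) hodd
          · rw [min_eq_right h] at hodd; exact (Nat.not_odd_iff_even.mpr ⟨r, hr⟩) hodd
        · exact ho
      obtain ⟨j, hj⟩ := hkodd
      refine ⟨j, by omega, ?_⟩
      have hw : w = v + ((k : ℕ) : ZMod (2 * m)) := by
        rw [hk, ZMod.natCast_val, ZMod.cast_id]; ring
      rw [hw, hj]
    · rintro ⟨j, hjm, rfl⟩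
      have h1 : ((2 * j + 1 : ℕ) : ZMod (2 * m)).val = 2 * j + 1 :=
        ZMod.val_cast_of_lt (by omega)
      have hc0 : ((2 * j + 1 : ℕ) : ZMod (2 * m)) ≠ 0 := by
        intro h; rw [h] at h1; simp at h1
      refine ⟨Sym2.mem_mk_left _ _, ?_⟩
      have h2 : ((v + ((2 * j + 1 : ℕ) : ZMod (2 * m))) - v) = ((2 * j + 1 : ℕ) : ZMod (2 * m)) := by
        ring
      have h3 : (v - (v + ((2 * j + 1 : ℕ) : ZMod (2 * m)))) = -((2 * j + 1 : ℕ) : ZMod (2 * m)) := by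
        ring
      show Odd (edgeOrder s(v, v + ((2 * j + 1 : ℕ) : ZMod (2 * m))))
      simp only [edgeOrder, Sym2.lift_mk]
      rw [h2, h3, ZMod.neg_val, if_neg hc0, h1]
      rcases le_total (2 * m - (2 * j + 1)) (2 * j + 1) with h | h
      · rw [min_eq_left h]; exact ⟨m - j - 1, by omega⟩
      · rw [min_eq_right h]; exact ⟨j, by omega⟩
  have hncard : T.ncard = m := by
    have hTeq : T = ↑((Finset.range m).image
        (fun j => s(v, v + ((2 * j + 1 : ℕ) : ZMod (2 * m))))) := by
      ext e
      rw [hchar]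
      simp only [Finset.coe_image, Finset.coe_range, Set.mem_image, Set.mem_Iio]
      constructor
      · rintro ⟨j, hj, rfl⟩; exact ⟨j, hj, rfl⟩
      · rintro ⟨j, hj, rfl⟩; exact ⟨j, hj, rfl⟩
    rw [hTeq, Set.ncard_coe_finset]
    rw [Finset.card_image_of_injOn, Finset.card_range]
    intro j hj j' hj' hjj
    simp only [Finset.coe_range, Set.mem_Iio] at hj hj'
    have hval : ∀ i : ℕ, i < m → ((2 * i + 1 : ℕ) : ZMod (2 * m)).val = 2 * i + 1 :=
      fun i hi => ZMod.val_cast_of_lt (by omega)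
    rcases Sym2.eq_iff.mp hjj with ⟨-, h⟩ | ⟨h1, h2⟩
    · have := congrArg (fun x => (x - v).val) h
      simp only [add_sub_cancel_left] at this
      rw [hval j hj, hval j' hj'] at this
      omega
    · exfalso
      have := congrArg (fun x => (x - v).val) h1.symm
      simp only [add_sub_cancel_left, sub_self, ZMod.val_zero] at this
      rw [hval j' hj'] at this
      omega
  refine ⟨hncard, ?_, ?_⟩
  · rintro e ⟨hv, hodd⟩ hdiag
    obtain ⟨w, rfl⟩ := Sym2.mem_iff_exists.mp hv
    have : v = w := Sym2.mk_isDiag_iff.mp hdiag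
    subst this
    simp [edgeOrder] at hodd
  · intro M hMspm
    obtain ⟨e, ⟨heM, hv⟩, -⟩ := hMspm.2.2.1 v
    refine ⟨e, heM, ?_⟩
    obtain ⟨w, rfl⟩ := Sym2.mem_iff_exists.mp hv
    refine ⟨Sym2.mem_mk_left _ _, ?_⟩
    have h1 : Odd ((w - v).val) := spm_edge_odd m hm hMspm heM
    have h2 : Odd ((v - w).val) :=
      spm_edge_odd m hm hMspm (by rw [Sym2.eq_swap]; exact heM)
    show Odd (edgeOrder s(v, w))
    simp only [edgeOrder, Sym2.lift_mk]
    rcases le_total ((v - w).val) ((w - v).val) with h | h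
    · rw [min_eq_left h]; exact h2
    · rw [min_eq_right h]; exact h1
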